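/- arXiv:2205.07345 — 2 statements merged into one kernel-verified Lean document; each statement's English description precedes it below -/
import Mathlib

section
/- The function x₁ ↦ exp(x₁) + 1.2·exp(1 - x₁) on the interval [0,1] attains its maximum at x₁ = 0, and also has a local maximum at x₁ = 1 (i.e., its value at 1 exceeds its values in a left neighborhood of 1); in particular it is not unimodal on [0,1]. -/
open Real Set

/-- The function `g x = exp x + 1.2 * exp (1 - x)` on `[0,1]` attains its maximum at `0`,
and also has a local maximum at `1` (its value at `1` exceeds its values in a left
neighborhood of `1`). -/
theorem arum_cost_not_unimodal :
    (∀ x ∈ Icc (0:ℝ) 1,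
        Real.exp x + 1.2 * Real.exp (1 - x) ≤ Real.exp 0 + 1.2 * Real.exp (1 - 0)) ∧
    (∃ δ > (0:ℝ), ∀ x ∈ Icc (0:ℝ) 1, 1 - δ < x → x < 1 →
        Real.exp x + 1.2 * Real.exp (1 - x) < Real.exp 1 + 1.2 * Real.exp (1 - 1)) := by
  constructor
  · intro x hx
    obtain ⟨h0, h1⟩ := hx
    have ht1 : (1:ℝ) ≤ Real.exp x := by
      simpa using Real.exp_le_exp.mpr h0
    have htE : Real.exp x ≤ Real.exp 1 := Real.exp_le_exp.mpr h1
    have htpos : (0:ℝ) < Real.exp x := Real.exp_pos x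
    have hsub : Real.exp (1 - x) = Real.exp 1 / Real.exp x := Real.exp_sub 1 x
    rw [hsub]
    simp only [sub_zero, Real.exp_zero]
    have key : (Real.exp x - 1) * (1.2 * Real.exp 1 - Real.exp x) ≥ 0 := by
      apply mul_nonneg (by linarith)
      nlinarith [Real.exp_pos 1]
    have hq : Real.exp 1 / Real.exp x * Real.exp x = Real.exp 1 :=
      div_mul_cancel₀ _ (ne_of_gt htpos)
    nlinarith [key, hq, htpos]
  · refine ⟨0.4, by norm_num, ?_⟩
    intro x hx hlo hhi
    have hx6 : (0.6:ℝ) < x := by linarith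
    have ht12 : (1.2:ℝ) < Real.exp x := by
      have := Real.add_one_le_exp x
      linarith
    have htE : Real.exp x < Real.exp 1 := Real.exp_lt_exp.mpr hhi
    have htpos : (0:ℝ) < Real.exp x := Real.exp_pos x
    have hsub : Real.exp (1 - x) = Real.exp 1 / Real.exp x := Real.exp_sub 1 x
    rw [hsub]
    simp only [sub_self, Real.exp_zero]
    have key : (Real.exp x - 1.2) * (Real.exp 1 - Real.exp x) > 0 := by
      apply mul_pos <;> linarith
    have hq : Real.exp 1 / Real.exp x * Real.exp x = Real.exp 1 :=
      div_mul_cancel₀ _ (ne_of_gt htpos)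
    nlinarith [key, hq, htpos]
end

section
/- Suppose for each i in a finite set S, the total budget C satisfies C ≥ Σ_{i∈S} Uᵢ. Then Φ(y) = max_{x ∈ X(y)} f(y,x) with f(y,x) = Σₙ qₙ(Σᵢ yᵢ(aₙᵢxᵢ + bₙᵢ))/(Uₙᶜ + Σᵢ yᵢ(aₙᵢxᵢ + bₙᵢ)) and X(y) = {x ≥ 0 : Σᵢ xᵢ ≤ C, yᵢLᵢ ≤ xᵢ ≤ yᵢUᵢ} is monotone increasing in y, i.e., if y ≤ y' componentwise (both in {0,1}ᵐ) then Φ(y) ≤ Φ(y'). -/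
open Set Finset

lemma ratio_mono_aux (c t1 t2 : ℝ) (hc : 0 < c) (h1 : 0 ≤ t1) (h : t1 ≤ t2) :
    t1 / (c + t1) ≤ t2 / (c + t2) := by
  rw [div_le_div_iff₀ (by linarith) (by linarith)]
  nlinarith

/-- If the budget is large enough (`C ≥ Σᵢ Uᵢ`), then the optimal-value function
`Φ(y) = sup_{x ∈ X(y)} f(y,x)` of the joint MRUM problem is monotone increasing
in the binary location vector `y`. -/
theorem phi_monotone_of_large_budget (ι : Type*) [Fintype ι] (m : ℕ)
    (q Uc : ι → ℝ) (a b : ι → Fin m → ℝ) (L U : Fin m → ℝ) (C : ℝ)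
    (hq : ∀ n, 0 < q n) (hUc : ∀ n, 0 < Uc n)
    (ha : ∀ n i, 0 ≤ a n i) (hb : ∀ n i, 0 ≤ b n i)
    (hL : ∀ i, 0 ≤ L i) (hLU : ∀ i, L i ≤ U i)
    (hC : (∑ i, U i) ≤ C) :
    let f : (Fin m → ℝ) → (Fin m → ℝ) → ℝ := fun y x =>
      ∑ n, q n * (∑ i, y i * (a n i * x i + b n i)) /
        (Uc n + ∑ i, y i * (a n i * x i + b n i))
    let X : (Fin m → ℝ) → Set (Fin m → ℝ) := fun y =>
      {x | (∀ i, 0 ≤ x i) ∧ (∑ i, x i) ≤ C ∧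
        ∀ i, y i * L i ≤ x i ∧ x i ≤ y i * U i}
    let Φ : (Fin m → ℝ) → ℝ := fun y => sSup (f y '' X y)
    ∀ y y' : Fin m → ℝ, (∀ i, y i = 0 ∨ y i = 1) → (∀ i, y' i = 0 ∨ y' i = 1) →
      (∀ i, y i ≤ y' i) → Φ y ≤ Φ y' := by
  intro f X Φ y y' hy hy' hle
  -- basic facts
  have hy0 : ∀ i, 0 ≤ y i := fun i => by rcases hy i with h | h <;> rw [h] <;> norm_num
  have hy'0 : ∀ i, 0 ≤ y' i := fun i => by rcases hy' i with h | h <;> rw [h] <;> norm_num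
  have hy'1 : ∀ i, y' i ≤ 1 := fun i => by rcases hy' i with h | h <;> rw [h] <;> norm_num
  -- the candidate point x' = y' * U in X y'
  set x' : Fin m → ℝ := fun i => y' i * U i with hx'def
  have hUpos : ∀ i, 0 ≤ U i := fun i => le_trans (hL i) (hLU i)
  have hx'mem : x' ∈ X y' := by
    refine ⟨fun i => mul_nonneg (hy'0 i) (hUpos i), ?_, fun i => ?_⟩
    · calc (∑ i, x' i) ≤ ∑ i, U i := by
            apply Finset.sum_le_sum
            intro i _
            calc y' i * U i ≤ 1 * U i := mul_le_mul_of_nonneg_right (hy'1 i) (hUpos i)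
            _ = U i := one_mul _
          _ ≤ C := hC
    · constructor
      · exact mul_le_mul_of_nonneg_left (hLU i) (hy'0 i)
      · exact le_refl _
  -- utility sums are nonnegative
  have hsum_nonneg : ∀ (z : Fin m → ℝ) (x : Fin m → ℝ), (∀ i, 0 ≤ z i) →
      (∀ i, 0 ≤ x i) → ∀ n, 0 ≤ ∑ i, z i * (a n i * x i + b n i) := by
    intro z x hz hx n
    apply Finset.sum_nonneg
    intro i _
    exact mul_nonneg (hz i) (add_nonneg (mul_nonneg (ha n i) (hx i)) (hb n i))
  -- f y' is bounded above on X y' by ∑ q n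
  have hbdd : BddAbove (f y' '' X y') := by
    refine ⟨∑ n, q n, ?_⟩
    rintro _ ⟨x, hx, rfl⟩
    apply Finset.sum_le_sum
    intro n _
    have ht : 0 ≤ ∑ i, y' i * (a n i * x i + b n i) :=
      hsum_nonneg y' x hy'0 hx.1 n
    rw [div_le_iff₀ (by linarith [hUc n])]
    nlinarith [hq n, hUc n]
  -- key comparison: for every x ∈ X y, f y x ≤ f y' x'
  have hkey : ∀ x ∈ X y, f y x ≤ f y' x' := by
    intro x hx
    apply Finset.sum_le_sum
    intro n _
    have h1 : 0 ≤ ∑ i, y i * (a n i * x i + b n i) :=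
      hsum_nonneg y x hy0 hx.1 n
    have h2 : (∑ i, y i * (a n i * x i + b n i)) ≤
        ∑ i, y' i * (a n i * x' i + b n i) := by
      apply Finset.sum_le_sum
      intro i _
      rcases hy i with h0 | h1i
      · rw [h0, zero_mul]
        exact mul_nonneg (hy'0 i)
          (add_nonneg (mul_nonneg (ha n i) (mul_nonneg (hy'0 i) (hUpos i))) (hb n i))
      · have hy'i : y' i = 1 := by
          rcases hy' i with h | h
          · exfalso; have := hle i; rw [h1i, h] at this; linarith
          · exact h
        have hxiU : x i ≤ U i := by
          have := (hx.2.2 i).2; rwa [h1i, one_mul] at this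
        rw [h1i, hy'i, one_mul, one_mul, hx'def]
        simp only [hy'i, one_mul]
        have : a n i * x i ≤ a n i * U i := mul_le_mul_of_nonneg_left hxiU (ha n i)
        linarith
    have := ratio_mono_aux (Uc n) _ _ (hUc n) h1 h2
    calc q n * (∑ i, y i * (a n i * x i + b n i)) /
          (Uc n + ∑ i, y i * (a n i * x i + b n i))
        = q n * ((∑ i, y i * (a n i * x i + b n i)) /
          (Uc n + ∑ i, y i * (a n i * x i + b n i))) := by ring
      _ ≤ q n * ((∑ i, y' i * (a n i * x' i + b n i)) /
          (Uc n + ∑ i, y' i * (a n i * x' i + b n i))) :=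
          mul_le_mul_of_nonneg_left this (le_of_lt (hq n))
      _ = q n * (∑ i, y' i * (a n i * x' i + b n i)) /
          (Uc n + ∑ i, y' i * (a n i * x' i + b n i)) := by ring
  -- X y nonempty: x₀ = y * U
  have hx0mem : (fun i => y i * U i) ∈ X y := by
    refine ⟨fun i => mul_nonneg (hy0 i) (hUpos i), ?_, fun i => ?_⟩
    · calc (∑ i, y i * U i) ≤ ∑ i, U i := by
            apply Finset.sum_le_sum
            intro i _
            have : y i ≤ 1 := by rcases hy i with h | h <;> rw [h] <;> norm_num
            calc y i * U i ≤ 1 * U i := mul_le_mul_of_nonneg_right this (hUpos i)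
            _ = U i := one_mul _
          _ ≤ C := hC
    · exact ⟨mul_le_mul_of_nonneg_left (hLU i) (hy0 i), le_refl _⟩
  -- conclude
  apply csSup_le (Set.Nonempty.image _ ⟨_, hx0mem⟩)
  rintro _ ⟨x, hx, rfl⟩
  calc f y x ≤ f y' x' := hkey x hx
    _ ≤ Φ y' := le_csSup hbdd ⟨x', hx'mem, rfl⟩
end
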